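/- Let H and Ξ be real separable Hilbert spaces, let (T_t)_{t ≥ 0} be a family of bounded linear operators on H satisfying the semigroup property T_{t+u} = T_t ∘ T_u for all t, u ≥ 0, and let G : Ξ → H be a bounded linear operator. Let (e_i)_{i∈ℕ} be a Hilbert basis of H and (b_j)_{j∈ℕ} a Hilbert basis of Ξ. Assume there are constants M > 0, η > 0 and γ ∈ [0, 1/2) such that ‖T_t‖_{op} ≤ M e^{−η t} for all t ≥ 0 and ∑_i ‖T_t e_i‖² ≤ M² t^{−2γ} for all t > 0. Then for every s > 0, ∑_j ‖T_s (G b_j)‖² ≤ M⁴ ‖G‖²_{op} e^{−η s} (s/2)^{−2γ}; in particular this sum is finite. -/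

import Mathlib

open ContinuousLinearMap

lemma parseval' {H : Type*} [NormedAddCommGroup H] [InnerProductSpace ℝ H]
    (e : HilbertBasis ℕ ℝ H) (x : H) :
    ENNReal.ofReal (‖x‖ ^ 2) = ∑' i, ENNReal.ofReal ((inner ℝ x (e i) : ℝ) ^ 2) := by
  have h : HasSum (fun i => (inner ℝ x (e i) : ℝ) ^ 2) (‖x‖ ^ 2) := by
    have := e.hasSum_inner_mul_inner x x
    simp only [real_inner_self_eq_norm_sq] at this
    convert this using 2 with i
    case e'_3 => rfl
    rw [sq, real_inner_comm]
  rw [← h.tsum_eq, ENNReal.ofReal_tsum_of_nonneg (fun i => sq_nonneg _) h.summable]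

lemma hs_adjoint_swap {H Ξ : Type*}
    [NormedAddCommGroup H] [InnerProductSpace ℝ H] [CompleteSpace H]
    [NormedAddCommGroup Ξ] [InnerProductSpace ℝ Ξ] [CompleteSpace Ξ]
    (e : HilbertBasis ℕ ℝ H) (b : HilbertBasis ℕ ℝ Ξ) (A : Ξ →L[ℝ] H) :
    ∑' j, ENNReal.ofReal (‖A (b j)‖ ^ 2)
      = ∑' i, ENNReal.ofReal (‖(ContinuousLinearMap.adjoint A) (e i)‖ ^ 2) := by
  calc ∑' j, ENNReal.ofReal (‖A (b j)‖ ^ 2)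
      = ∑' j, ∑' i, ENNReal.ofReal ((inner ℝ (A (b j)) (e i) : ℝ) ^ 2) :=
        tsum_congr fun j => parseval' e (A (b j))
    _ = ∑' i, ∑' j, ENNReal.ofReal ((inner ℝ (A (b j)) (e i) : ℝ) ^ 2) := ENNReal.tsum_comm
    _ = ∑' i, ENNReal.ofReal (‖(ContinuousLinearMap.adjoint A) (e i)‖ ^ 2) := by
        refine tsum_congr fun i => ?_
        rw [parseval' b]
        refine tsum_congr fun j => ?_
        rw [ContinuousLinearMap.adjoint_inner_left, real_inner_comm]



/-- If `(T_t)` is a semigroup of bounded operators on `H` with `‖T_t‖ ≤ M e^{−ηt}` and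
Hilbert–Schmidt bound `∑_i ‖T_t e_i‖² ≤ M² t^{−2γ}` (`γ ∈ [0, 1/2)`), and `G : Ξ → H` is
bounded, then `∑_j ‖T_s (G b_j)‖² ≤ M⁴ ‖G‖² e^{−ηs} (s/2)^{−2γ} < ∞` for every `s > 0`. -/
theorem stmt_5
    {H Ξ : Type*}
    [NormedAddCommGroup H] [InnerProductSpace ℝ H] [CompleteSpace H]
    [TopologicalSpace.SeparableSpace H]
    [NormedAddCommGroup Ξ] [InnerProductSpace ℝ Ξ] [CompleteSpace Ξ]
    [TopologicalSpace.SeparableSpace Ξ]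
    (T : ℝ → H →L[ℝ] H)
    (hsemi : ∀ t u : ℝ, 0 ≤ t → 0 ≤ u → T (t + u) = (T t).comp (T u))
    (G : Ξ →L[ℝ] H)
    (e : HilbertBasis ℕ ℝ H) (b : HilbertBasis ℕ ℝ Ξ)
    (M η γ : ℝ) (hM : 0 < M) (hη : 0 < η) (hγ0 : 0 ≤ γ) (hγ : γ < 1 / 2)
    (hTnorm : ∀ t : ℝ, 0 ≤ t → ‖T t‖ ≤ M * Real.exp (-η * t))
    (hTHS : ∀ t : ℝ, 0 < t →
      ∑' i : ℕ, ENNReal.ofReal (‖T t (e i)‖ ^ 2) ≤ ENNReal.ofReal (M ^ 2 * t ^ (-(2 * γ)))) :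
    ∀ s : ℝ, 0 < s →
      ∑' j : ℕ, ENNReal.ofReal (‖T s (G (b j))‖ ^ 2) ≤
        ENNReal.ofReal (M ^ 4 * ‖G‖ ^ 2 * Real.exp (-η * s) * (s / 2) ^ (-(2 * γ))) ∧
      ∑' j : ℕ, ENNReal.ofReal (‖T s (G (b j))‖ ^ 2) ≠ ⊤ := by
  intro s hs
  set h := s / 2 with hdef
  have hh : 0 < h := by positivity
  have hTs : T s = (T h).comp (T h) := by
    have hadd : h + h = s := by rw [hdef]; ring
    rw [← hadd]; exact hsemi h h hh.le hh.le
  -- step 1: pull out one operator norm factor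
  have step1 : ∑' j : ℕ, ENNReal.ofReal (‖T s (G (b j))‖ ^ 2) ≤
      ENNReal.ofReal (‖T h‖ ^ 2) * ∑' j : ℕ, ENNReal.ofReal (‖T h (G (b j))‖ ^ 2) := by
    rw [← ENNReal.tsum_mul_left]
    refine ENNReal.tsum_le_tsum fun j => ?_
    rw [← ENNReal.ofReal_mul (sq_nonneg _), ← mul_pow]
    apply ENNReal.ofReal_le_ofReal
    apply pow_le_pow_left₀ (norm_nonneg _)
    rw [hTs]
    exact (T h).le_opNorm _
  -- step 2: HS bound for T h ∘ G
  have step2 : ∑' j : ℕ, ENNReal.ofReal (‖T h (G (b j))‖ ^ 2) ≤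
      ENNReal.ofReal (‖G‖ ^ 2) * ∑' i : ℕ, ENNReal.ofReal (‖T h (e i)‖ ^ 2) := by
    have e1 : ∑' j : ℕ, ENNReal.ofReal (‖T h (G (b j))‖ ^ 2)
        = ∑' i : ℕ, ENNReal.ofReal
            (‖(ContinuousLinearMap.adjoint ((T h).comp G)) (e i)‖ ^ 2) := by
      have := hs_adjoint_swap e b ((T h).comp G)
      simpa using this
    have e2 : ∑' i : ℕ, ENNReal.ofReal (‖(ContinuousLinearMap.adjoint (T h)) (e i)‖ ^ 2)
        = ∑' i : ℕ, ENNReal.ofReal (‖T h (e i)‖ ^ 2) := by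
      have := hs_adjoint_swap e e (ContinuousLinearMap.adjoint (T h))
      rw [ContinuousLinearMap.adjoint_adjoint] at this
      exact this
    rw [e1, ← e2, ← ENNReal.tsum_mul_left]
    refine ENNReal.tsum_le_tsum fun i => ?_
    rw [← ENNReal.ofReal_mul (sq_nonneg _), ← mul_pow]
    apply ENNReal.ofReal_le_ofReal
    apply pow_le_pow_left₀ (norm_nonneg _)
    rw [ContinuousLinearMap.adjoint_comp]
    calc ‖(ContinuousLinearMap.adjoint G) ((ContinuousLinearMap.adjoint (T h)) (e i))‖
        ≤ ‖ContinuousLinearMap.adjoint G‖ * ‖(ContinuousLinearMap.adjoint (T h)) (e i)‖ :=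
          (ContinuousLinearMap.adjoint G).le_opNorm _
      _ = ‖G‖ * ‖(ContinuousLinearMap.adjoint (T h)) (e i)‖ := by
          rw [LinearIsometryEquiv.norm_map ContinuousLinearMap.adjoint G]
  have hGnn : (0:ℝ) ≤ ‖G‖ ^ 2 := sq_nonneg _
  have key : ∑' j : ℕ, ENNReal.ofReal (‖T s (G (b j))‖ ^ 2) ≤
      ENNReal.ofReal (M ^ 4 * ‖G‖ ^ 2 * Real.exp (-η * s) * (s / 2) ^ (-(2 * γ))) := by
    refine step1.trans ?_
    refine le_trans (mul_le_mul_right (step2.trans (mul_le_mul_right (hTHS h hh) _)) _) ?_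
    rw [← ENNReal.ofReal_mul hGnn, ← ENNReal.ofReal_mul (sq_nonneg _)]
    apply ENNReal.ofReal_le_ofReal
    have hTh2 : ‖T h‖ ^ 2 ≤ M ^ 2 * Real.exp (-η * s) := by
      have h1 : ‖T h‖ ≤ M * Real.exp (-η * h) := hTnorm h hh.le
      calc ‖T h‖ ^ 2 ≤ (M * Real.exp (-η * h)) ^ 2 :=
            pow_le_pow_left₀ (norm_nonneg _) h1 2
        _ = M ^ 2 * Real.exp (-η * s) := by
            rw [mul_pow, sq (Real.exp _), ← Real.exp_add]
            congr 2
            rw [hdef]; ring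
    calc ‖T h‖ ^ 2 * (‖G‖ ^ 2 * (M ^ 2 * h ^ (-(2 * γ))))
        ≤ M ^ 2 * Real.exp (-η * s) * (‖G‖ ^ 2 * (M ^ 2 * h ^ (-(2 * γ)))) := by
          apply mul_le_mul_of_nonneg_right hTh2
          have : (0:ℝ) ≤ h ^ (-(2 * γ)) := Real.rpow_nonneg hh.le _
          positivity
      _ = M ^ 4 * ‖G‖ ^ 2 * Real.exp (-η * s) * (s / 2) ^ (-(2 * γ)) := by
          rw [← hdef]; ring
  exact ⟨key, ne_top_of_le_ne_top ENNReal.ofReal_ne_top key⟩
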